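/- Let τ ∈ Δ and φ ∈ ℝ, and let S₁ = {F_t}_{t≥0} be the group of elliptic automorphisms F_t(z) = m_τ(e^{iφt}·m_τ(z)). Let S₂ = {G_t}_{t≥0} be a one-parameter continuous semigroup on Δ such that for each t > 0 the map G_t is not an automorphism of Δ. If F₁(G₁(z)) = G₁(F₁(z)) for all z ∈ Δ, then F₁(G_t(z)) = G_t(F₁(z)) for all t ≥ 0 and all z ∈ Δ. -/

import Mathlib

open Complex Filter Set
open scoped Topology

noncomputable section

/-- The open unit disk in the complex plane. -/
def unitDisk : Set ℂ := {z : ℂ | ‖z‖ < 1}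

/-- The Stolz angle at a boundary point `τ` with half-opening `α`. -/
def stolzAngle (τ : ℂ) (α : ℝ) : Set ℂ :=
  {z ∈ unitDisk | |Complex.arg (1 - (starRingEnd ℂ) τ * z)| < α}

/-- `h` has angular limit `L` at `τ`: `h z → L` as `z → τ` in every Stolz angle. -/
def AngularLimit (h : ℂ → ℂ) (τ L : ℂ) : Prop :=
  ∀ α : ℝ, 0 < α → α < Real.pi / 2 →
    Tendsto h (nhdsWithin τ (stolzAngle τ α)) (nhds L)

/-- A one-parameter continuous semigroup of holomorphic self-mappings of the unit disk. -/
structure ContSemigroupOn (F : ℝ → ℂ → ℂ) : Prop where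
  holo : ∀ t : ℝ, 0 ≤ t → DifferentiableOn ℂ (F t) unitDisk
  maps : ∀ t : ℝ, 0 ≤ t → MapsTo (F t) unitDisk unitDisk
  comp : ∀ s : ℝ, 0 ≤ s → ∀ t : ℝ, 0 ≤ t → ∀ z ∈ unitDisk, F (t + s) z = F t (F s z)
  cont : ∀ z ∈ unitDisk, Tendsto (fun t : ℝ => F t z) (nhdsWithin 0 (Set.Ioi 0)) (nhds z)

/-- `f` is the infinitesimal generator of the semigroup `F`:
for each `z ∈ Δ`, `u(t) = F t z` solves `u' + f(u) = 0`, `u 0 = z`. -/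
def Generates (f : ℂ → ℂ) (F : ℝ → ℂ → ℂ) : Prop :=
  ∀ z ∈ unitDisk, F 0 z = z ∧
    ∀ t : ℝ, 0 ≤ t →
      HasDerivWithinAt (fun s : ℝ => F s z) (-(f (F t z))) (Set.Ici 0) t

/-- `τ` is a boundary null point of `f`: `f (r τ) → 0` as `r → 1⁻`. -/
def BoundaryNullPoint (f : ℂ → ℂ) (τ : ℂ) : Prop :=
  Tendsto (fun r : ℝ => f ((r : ℂ) * τ)) (nhdsWithin 1 (Set.Iio 1)) (nhds 0)

/-- An automorphism of the unit disk: a holomorphic bijection of the disk onto itself. -/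
def IsDiskAutomorphism (F : ℂ → ℂ) : Prop :=
  DifferentiableOn ℂ F unitDisk ∧ BijOn F unitDisk unitDisk

/-- The Möbius involution `m_τ(z) = (τ - z)/(1 - τ̄ z)`. -/
def mobius (τ z : ℂ) : ℂ := (τ - z) / (1 - (starRingEnd ℂ) τ * z)

/-!  ### Auxiliary lemmas -/

open Metric in
lemma unitDisk_eq : unitDisk = Metric.ball (0:ℂ) 1 := by
  ext z; simp [unitDisk, Complex.dist_eq]

lemma mem_unitDisk {z : ℂ} : z ∈ unitDisk ↔ ‖z‖ < 1 := Iff.rfl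

lemma isOpen_unitDisk : IsOpen unitDisk := by
  rw [unitDisk_eq]; exact Metric.isOpen_ball

lemma denom_ne {τ z : ℂ} (hτ : τ ∈ unitDisk) (hz : z ∈ unitDisk) :
    (1 : ℂ) - (starRingEnd ℂ) τ * z ≠ 0 := by
  intro h
  have h1 : (starRingEnd ℂ) τ * z = 1 := by linear_combination -h
  have : ‖(starRingEnd ℂ) τ * z‖ = 1 := by rw [h1]; simp
  rw [norm_mul, Complex.norm_conj] at this
  nlinarith [norm_nonneg τ, norm_nonneg z, mem_unitDisk.1 hτ, mem_unitDisk.1 hz]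

lemma mobius_mem {τ z : ℂ} (hτ : τ ∈ unitDisk) (hz : z ∈ unitDisk) :
    mobius τ z ∈ unitDisk := by
  have hd := denom_ne hτ hz
  have key : Complex.normSq (1 - (starRingEnd ℂ) τ * z) - Complex.normSq (τ - z)
      = (1 - Complex.normSq τ) * (1 - Complex.normSq z) := by
    simp only [Complex.normSq_apply, Complex.sub_re, Complex.sub_im, Complex.mul_re,
      Complex.mul_im, Complex.one_re, Complex.one_im, Complex.conj_re, Complex.conj_im]
    ring
  have hτ1 : Complex.normSq τ < 1 := by
    have := mem_unitDisk.1 hτ; rw [← Complex.sq_norm]; nlinarith [norm_nonneg τ]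
  have hz1 : Complex.normSq z < 1 := by
    have := mem_unitDisk.1 hz; rw [← Complex.sq_norm]; nlinarith [norm_nonneg z]
  have hlt : Complex.normSq (τ - z) < Complex.normSq (1 - (starRingEnd ℂ) τ * z) := by nlinarith
  have habs : ‖τ - z‖ < ‖1 - (starRingEnd ℂ) τ * z‖ := by
    have h1 := Complex.sq_norm (τ - z)
    have h2 := Complex.sq_norm (1 - (starRingEnd ℂ) τ * z)
    nlinarith [norm_nonneg (τ - z), norm_nonneg (1 - (starRingEnd ℂ) τ * z)]
  rw [mem_unitDisk, mobius, norm_div, div_lt_one (norm_pos_iff.2 hd)]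
  exact habs

lemma mobius_mobius {τ z : ℂ} (hτ : τ ∈ unitDisk) (hz : z ∈ unitDisk) :
    mobius τ (mobius τ z) = z := by
  have hd1 := denom_ne hτ hz
  have hd2 := denom_ne hτ (mobius_mem hτ hz)
  simp only [mobius] at hd2 ⊢
  rw [div_eq_iff hd2]
  linear_combination (-(τ - z)) * mul_inv_cancel₀ hd1

lemma mobius_diffOn {τ : ℂ} (hτ : τ ∈ unitDisk) :
    DifferentiableOn ℂ (mobius τ) unitDisk := by
  apply DifferentiableOn.div
  · exact (differentiableOn_const τ).sub differentiableOn_id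
  · exact (differentiableOn_const 1).sub ((differentiableOn_const _).mul differentiableOn_id)
  · exact fun z hz => denom_ne hτ hz

lemma mul_mem_unitDisk {A x : ℂ} (hA : ‖A‖ = 1) (hx : x ∈ unitDisk) :
    A * x ∈ unitDisk := by
  rw [mem_unitDisk, norm_mul, hA, one_mul]
  exact hx

/-! ### Schwarz lemma material -/

open Metric in
lemma schwarz_dslope {f : ℂ → ℂ} (hd : DifferentiableOn ℂ f (ball 0 1))
    (hm : MapsTo f (ball 0 1) (ball 0 1)) (hf0 : f 0 = 0) {z : ℂ} (hz : z ∈ ball 0 1) :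
    ‖dslope f 0 z‖ ≤ 1 := by
  have hm' : MapsTo f (ball 0 1) (ball (f 0) 1) := by rwa [hf0]
  simpa using Complex.norm_dslope_le_div_of_mapsTo_ball hd (hm'.mono_right ball_subset_closedBall) hz

open Metric in
lemma schwarz_norm_le {f : ℂ → ℂ} (hd : DifferentiableOn ℂ f (ball 0 1))
    (hm : MapsTo f (ball 0 1) (ball 0 1)) (hf0 : f 0 = 0) {z : ℂ} (hz : z ∈ ball 0 1) :
    ‖f z‖ ≤ ‖z‖ := by
  have h1 : f z = (z - 0) • dslope f 0 z := by rw [sub_smul_dslope, hf0, sub_zero]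
  rw [h1, smul_eq_mul, norm_mul, sub_zero]
  calc ‖z‖ * ‖dslope f 0 z‖ ≤ ‖z‖ * 1 :=
        mul_le_mul_of_nonneg_left (schwarz_dslope hd hm hf0 hz) (norm_nonneg z)
    _ = ‖z‖ := mul_one _

open Metric in
lemma schwarz_deriv_le {f : ℂ → ℂ} (hd : DifferentiableOn ℂ f (ball 0 1))
    (hm : MapsTo f (ball 0 1) (ball 0 1)) (hf0 : f 0 = 0) :
    ‖deriv f 0‖ ≤ 1 := by
  have := schwarz_dslope hd hm hf0 (mem_ball_self one_pos)
  rwa [dslope_same] at this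

open Metric in
lemma schwarz_quad {f : ℂ → ℂ} (hd : DifferentiableOn ℂ f (ball 0 1))
    (hm : MapsTo f (ball 0 1) (ball 0 1)) (hf0 : f 0 = 0) {z : ℂ} (hz : z ∈ ball 0 1) :
    ‖f z - deriv f 0 * z‖ ≤ 3 * ‖z‖ ^ 2 := by
  set d := dslope f 0 with hdd
  have hddiff : DifferentiableOn ℂ d (ball 0 1) :=
    (differentiableOn_dslope (ball_mem_nhds _ one_pos)).mpr hd
  have hd0 : d 0 = deriv f 0 := dslope_same f 0
  have hdm : MapsTo d (ball 0 1) (ball (d 0) 3) := by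
    intro w hw
    have h1 : ‖d w‖ ≤ 1 := schwarz_dslope hd hm hf0 hw
    have h2 : ‖d 0‖ ≤ 1 := by rw [hd0]; exact schwarz_deriv_le hd hm hf0
    have : ‖d w - d 0‖ < 3 := by
      calc ‖d w - d 0‖ ≤ ‖d w‖ + ‖d 0‖ := norm_sub_le _ _
        _ ≤ 2 := by linarith
        _ < 3 := by norm_num
    simpa [mem_ball, dist_eq_norm] using this
  have hq : ∀ w ∈ ball (0:ℂ) 1, ‖dslope d 0 w‖ ≤ 3 := by
    intro w hw
    simpa using Complex.norm_dslope_le_div_of_mapsTo_ball hddiff (hdm.mono_right ball_subset_closedBall) hw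
  have h1 : f z - deriv f 0 * z = z * (z * dslope d 0 z) := by
    have e1 : (z - 0) • d z = f z - f 0 := sub_smul_dslope f 0 z
    have e2 : (z - 0) • dslope d 0 z = d z - d 0 := sub_smul_dslope d 0 z
    simp only [sub_zero, smul_eq_mul, hf0, sub_zero] at e1 e2
    calc f z - deriv f 0 * z = z * d z - deriv f 0 * z := by rw [e1]
      _ = z * (d 0 + (d z - d 0)) - deriv f 0 * z := by ring_nf
      _ = z * (d 0 + z * dslope d 0 z) - deriv f 0 * z := by rw [e2]
      _ = z * (z * dslope d 0 z) := by rw [hd0]; ring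
  rw [h1, norm_mul, norm_mul]
  calc ‖z‖ * (‖z‖ * ‖dslope d 0 z‖) ≤ ‖z‖ * (‖z‖ * 3) := by
        apply mul_le_mul_of_nonneg_left _ (norm_nonneg z)
        exact mul_le_mul_of_nonneg_left (hq z hz) (norm_nonneg z)
    _ = 3 * ‖z‖ ^ 2 := by ring

open Metric in
lemma schwarz_rigid {f : ℂ → ℂ} (hd : DifferentiableOn ℂ f (ball 0 1))
    (hm : MapsTo f (ball 0 1) (ball 0 1)) (hf0 : f 0 = 0) {w : ℂ} (hw : w ∈ ball 0 1)
    (hww : ‖dslope f 0 w‖ = 1) :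
    Set.EqOn f (fun z => dslope f 0 w * z) (ball 0 1) := by
  set d := dslope f 0 with hdd
  have hddiff : DifferentiableOn ℂ d (ball 0 1) :=
    (differentiableOn_dslope (ball_mem_nhds _ one_pos)).mpr hd
  have hmax : IsMaxOn (norm ∘ d) (ball 0 1) w := by
    intro x hx
    simp only [Function.comp_apply, mem_setOf_eq, hww]
    exact schwarz_dslope hd hm hf0 hx
  have heq := Complex.eqOn_of_isPreconnected_of_isMaxOn_norm
    (convex_ball (0:ℂ) 1).isPreconnected isOpen_ball hddiff hw hmax
  intro z hz
  have h1 : (z - 0) • d z = f z - f 0 := sub_smul_dslope f 0 z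
  have h2 : d z = d w := heq hz
  simp only [sub_zero, smul_eq_mul, hf0, sub_zero] at h1
  rw [← h1, h2]; ring

open Metric in
lemma koenigs_uniqueness {g u v : ℂ → ℂ}
    (hgd : DifferentiableOn ℂ g (ball 0 1)) (hgm : MapsTo g (ball 0 1) (ball 0 1))
    (hg0 : g 0 = 0) (hl0 : deriv g 0 ≠ 0) (hl1 : ‖deriv g 0‖ < 1)
    (hud : DifferentiableOn ℂ u (ball 0 1)) (hum : MapsTo u (ball 0 1) (ball 0 1))
    (hu0 : u 0 = 0)
    (hvd : DifferentiableOn ℂ v (ball 0 1)) (hvm : MapsTo v (ball 0 1) (ball 0 1))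
    (hv0 : v 0 = 0)
    (hcu : ∀ z ∈ ball (0:ℂ) 1, u (g z) = g (u z))
    (hcv : ∀ z ∈ ball (0:ℂ) 1, v (g z) = g (v z))
    (hderiv : deriv u 0 = deriv v 0) :
    Set.EqOn u v (ball 0 1) := by
  set l := deriv g 0 with hl
  set a := ‖l‖ with ha
  have ha0 : 0 < a := norm_pos_iff.2 hl0
  have ha1 : a < 1 := hl1
  obtain ⟨r, c, hr0, hr1, hc0, hc2a, hc1, hac⟩ :
      ∃ r c : ℝ, 0 < r ∧ r < 1 ∧ 0 < c ∧ c ^ 2 < a ∧ c < 1 ∧ a + 3 * r ≤ c := by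
    have hsa : a < Real.sqrt a := by
      have h := Real.sq_sqrt ha0.le
      nlinarith [Real.sqrt_nonneg a]
    have hsa1 : Real.sqrt a < 1 := by
      have := Real.sqrt_lt_sqrt ha0.le ha1
      rwa [Real.sqrt_one] at this
    refine ⟨(Real.sqrt a - a) / 6, (a + Real.sqrt a) / 2, by linarith, by linarith,
      by positivity, ?_, by linarith, by linarith⟩
    have := Real.sq_sqrt ha0.le
    nlinarith
  have hrball : closedBall (0:ℂ) r ⊆ ball 0 1 := by
    intro z hz
    rw [mem_closedBall] at hz
    rw [mem_ball]
    linarith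
  -- contraction estimate
  have hcontr : ∀ z ∈ closedBall (0:ℂ) r, ‖g z‖ ≤ c * ‖z‖ := by
    intro z hz
    have hz1 : z ∈ ball (0:ℂ) 1 := hrball hz
    have hq := schwarz_quad hgd hgm hg0 hz1
    have hzr : ‖z‖ ≤ r := by rwa [mem_closedBall, dist_zero_right] at hz
    have h1 : ‖g z‖ ≤ ‖l * z‖ + ‖g z - l * z‖ := by
      have := norm_add_le (l * z) (g z - l * z)
      simpa using this
    rw [norm_mul] at h1
    have h2 : 3 * ‖z‖^2 ≤ 3 * r * ‖z‖ := by nlinarith [norm_nonneg z]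
    calc ‖g z‖ ≤ a * ‖z‖ + 3 * ‖z‖^2 := by rw [ha]; linarith
      _ ≤ a * ‖z‖ + 3 * r * ‖z‖ := by linarith
      _ ≤ c * ‖z‖ := by nlinarith [norm_nonneg z]
  -- iterates
  have hitmaps : ∀ n : ℕ, MapsTo (g^[n]) (ball 0 1) (ball 0 1) := fun n => hgm.iterate n
  have hitdiff : ∀ n : ℕ, DifferentiableOn ℂ (g^[n]) (ball 0 1) := by
    intro n
    induction n with
    | zero => simpa using differentiableOn_id
    | succ n ih =>
      rw [Function.iterate_succ]
      exact DifferentiableOn.comp ih hgd hgm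
  have hit0 : ∀ n : ℕ, g^[n] 0 = 0 := by
    intro n
    induction n with
    | zero => rfl
    | succ n ih => rw [Function.iterate_succ']; simp [Function.comp, ih, hg0]
  have hitbound : ∀ n : ℕ, ∀ z ∈ closedBall (0:ℂ) r, ‖g^[n] z‖ ≤ c ^ n * ‖z‖ := by
    intro n
    induction n with
    | zero => intro z hz; simp
    | succ n ih =>
      intro z hz
      have hzr : ‖z‖ ≤ r := by rwa [mem_closedBall, dist_zero_right] at hz
      have h1 : ‖g^[n] z‖ ≤ c ^ n * ‖z‖ := ih z hz
      have hmem : g^[n] z ∈ closedBall (0:ℂ) r := by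
        rw [mem_closedBall, dist_zero_right]
        calc ‖g^[n] z‖ ≤ c ^ n * ‖z‖ := h1
          _ ≤ 1 * r := by
            apply mul_le_mul (pow_le_one₀ hc0.le hc1.le) hzr (norm_nonneg z) one_pos.le
          _ = r := one_mul r
      rw [Function.iterate_succ']
      simp only [Function.comp_apply]
      calc ‖g (g^[n] z)‖ ≤ c * ‖g^[n] z‖ := hcontr _ hmem
        _ ≤ c * (c ^ n * ‖z‖) := by
            exact mul_le_mul_of_nonneg_left h1 hc0.le
        _ = c ^ (n+1) * ‖z‖ := by ring
  have hitmem : ∀ n : ℕ, ∀ z ∈ closedBall (0:ℂ) r, g^[n] z ∈ closedBall (0:ℂ) r := by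
    intro n z hz
    have hzr : ‖z‖ ≤ r := by rwa [mem_closedBall, dist_zero_right] at hz
    rw [mem_closedBall, dist_zero_right]
    calc ‖g^[n] z‖ ≤ c ^ n * ‖z‖ := hitbound n z hz
      _ ≤ 1 * r := mul_le_mul (pow_le_one₀ hc0.le hc1.le) hzr (norm_nonneg z) one_pos.le
      _ = r := one_mul r
  have hderiv_it : ∀ n : ℕ, deriv (g^[n]) 0 = l ^ n := by
    intro n
    induction n with
    | zero => simp
    | succ n ih =>
      rw [Function.iterate_succ']
      have hd1 : DifferentiableAt ℂ g ((g^[n]) 0) := by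
        rw [hit0 n]
        exact hgd.differentiableAt (ball_mem_nhds _ one_pos)
      have hd2 : DifferentiableAt ℂ (g^[n]) 0 :=
        (hitdiff n).differentiableAt (ball_mem_nhds _ one_pos)
      rw [deriv_comp 0 hd1 hd2, hit0 n, ih, ← hl, pow_succ]
      ring
  -- the approximating sequence
  set H : ℕ → ℂ → ℂ := fun n z => (l ^ n)⁻¹ * g^[n] z with hH
  set D : ℕ → ℂ → ℂ := fun n z => H (n+1) z - H n z with hD
  have hln : ∀ n : ℕ, l ^ n ≠ 0 := fun n => pow_ne_zero n hl0
  have hDbound : ∀ (n : ℕ), ∀ z ∈ closedBall (0:ℂ) r,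
      ‖D n z‖ ≤ (3 * r^2 / a) * (c^2 / a) ^ n := by
    intro n z hz
    have hzr : ‖z‖ ≤ r := by rwa [mem_closedBall, dist_zero_right] at hz
    have hwmem := hitmem n z hz
    have hw1 : g^[n] z ∈ ball (0:ℂ) 1 := hrball hwmem
    have hDeq : D n z = (l ^ (n+1))⁻¹ * (g (g^[n] z) - l * g^[n] z) := by
      simp only [hD, hH]
      rw [Function.iterate_succ']
      simp only [Function.comp_apply]
      field_simp [pow_succ]
      ring
    rw [hDeq, norm_mul, norm_inv, norm_pow]
    have hq := schwarz_quad hgd hgm hg0 hw1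
    rw [← hl] at hq
    have hb : ‖g^[n] z‖ ≤ c ^ n * r := by
      calc ‖g^[n] z‖ ≤ c ^ n * ‖z‖ := hitbound n z hz
        _ ≤ c ^ n * r := mul_le_mul_of_nonneg_left hzr (pow_nonneg hc0.le n)
    have h2 : ‖g (g^[n] z) - l * g^[n] z‖ ≤ 3 * (c^n * r)^2 := by
      calc ‖g (g^[n] z) - l * g^[n] z‖ ≤ 3 * ‖g^[n] z‖^2 := hq
        _ ≤ 3 * (c^n * r)^2 := by nlinarith [norm_nonneg (g^[n] z)]
    have han : (0:ℝ) < a ^ (n+1) := pow_pos ha0 _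
    calc (‖l‖ ^ (n+1))⁻¹ * ‖g (g^[n] z) - l * g^[n] z‖
        ≤ (a ^ (n+1))⁻¹ * (3 * (c^n * r)^2) := by
          rw [← ha]
          exact mul_le_mul le_rfl h2 (norm_nonneg _) (by positivity)
      _ = (3 * r^2 / a) * (c^2 / a) ^ n := by
          rw [div_pow, ← pow_mul]
          rw [mul_pow, ← pow_mul, mul_comm n 2]
          field_simp
          ring
  have hsum : Summable (fun n : ℕ => (3 * r^2 / a) * (c^2 / a) ^ n) := by
    apply Summable.mul_left
    apply summable_geometric_of_lt_one (by positivity)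
    rw [div_lt_one ha0]
    exact hc2a
  have hTU : TendstoUniformlyOn (fun N z => ∑ n ∈ Finset.range N, D n z)
      (fun z => ∑' n, D n z) atTop (closedBall (0:ℂ) r) :=
    tendstoUniformlyOn_tsum_nat hsum (fun n z hz => hDbound n z hz)
  set h : ℂ → ℂ := fun z => H 0 z + ∑' n, D n z with hh
  have hHsum : ∀ (N : ℕ) (z : ℂ), H N z = H 0 z + ∑ n ∈ Finset.range N, D n z := by
    intro N z
    have := Finset.sum_range_sub (fun n => H n z) N
    simp only [hD] at this ⊢
    rw [this]
    ring
  have hTUH : TendstoUniformlyOn (fun N z => H N z) h atTop (closedBall (0:ℂ) r) := by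
    rw [Metric.tendstoUniformlyOn_iff] at hTU ⊢
    intro ε hε
    filter_upwards [hTU ε hε] with N hN z hz
    have := hN z hz
    rw [hHsum N z, hh]
    simpa [dist_add_left] using this
  have hsub : ball (0:ℂ) r ⊆ ball 0 1 := fun z hz => hrball (ball_subset_closedBall hz)
  have hTUball : TendstoUniformlyOn (fun N z => H N z) h atTop (ball (0:ℂ) r) :=
    hTUH.mono ball_subset_closedBall
  have hTLU : TendstoLocallyUniformlyOn (fun N z => H N z) h atTop (ball (0:ℂ) r) :=
    hTUball.tendstoLocallyUniformlyOn
  have hHdiff : ∀ n : ℕ, DifferentiableOn ℂ (H n) (ball (0:ℂ) r) := by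
    intro n
    exact (differentiableOn_const _).mul ((hitdiff n).mono hsub)
  have hhd : DifferentiableOn ℂ h (ball (0:ℂ) r) :=
    hTLU.differentiableOn (Eventually.of_forall hHdiff) isOpen_ball
  have hderivTLU := hTLU.deriv (Eventually.of_forall hHdiff) isOpen_ball
  have hderivHn : ∀ n : ℕ, deriv (H n) 0 = 1 := by
    intro n
    have hd2 : DifferentiableAt ℂ (g^[n]) 0 :=
      (hitdiff n).differentiableAt (ball_mem_nhds _ one_pos)
    have : deriv (H n) 0 = (l ^ n)⁻¹ * deriv (g^[n]) 0 := by
      simp only [hH]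
      exact deriv_const_mul _ hd2
    rw [this, hderiv_it n, inv_mul_cancel₀ (hln n)]
  have hderivh : deriv h 0 = 1 := by
    have htend0 : Tendsto (fun n => deriv (H n) 0) atTop (𝓝 (deriv h 0)) := by
      have := hderivTLU.tendsto_at (mem_ball_self hr0)
      simpa using this
    have h1 : Tendsto (fun n : ℕ => deriv (H n) 0) atTop (𝓝 1) := by
      simp only [hderivHn]
      exact tendsto_const_nhds
    exact tendsto_nhds_unique htend0 h1
  have hpt : ∀ z ∈ closedBall (0:ℂ) r, Tendsto (fun n => H n z) atTop (𝓝 (h z)) :=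
    fun z hz => hTUH.tendsto_at hz
  -- the functional equation for commuting maps
  have hfe : ∀ w : ℂ → ℂ, DifferentiableOn ℂ w (ball 0 1) → MapsTo w (ball 0 1) (ball 0 1) →
      w 0 = 0 → (∀ z ∈ ball (0:ℂ) 1, w (g z) = g (w z)) →
      ∀ z ∈ closedBall (0:ℂ) r, h (w z) = deriv w 0 * h z := by
    intro w hwd hwm hw0 hcw z hz
    have hz1 : z ∈ ball (0:ℂ) 1 := hrball hz
    have hzr : ‖z‖ ≤ r := by rwa [mem_closedBall, dist_zero_right] at hz
    have hwz_r : w z ∈ closedBall (0:ℂ) r := by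
      rw [mem_closedBall, dist_zero_right]
      exact le_trans (schwarz_norm_le hwd hwm hw0 hz1) hzr
    have hitcomm : ∀ n : ℕ, ∀ x ∈ ball (0:ℂ) 1, w (g^[n] x) = g^[n] (w x) := by
      intro n
      induction n with
      | zero => intro x hx; rfl
      | succ n ih =>
        intro x hx
        rw [Function.iterate_succ]
        simp only [Function.comp_apply]
        rw [ih (g x) (hgm hx), hcw x hx]
    have t1 : Tendsto (fun n => H n (w z)) atTop (𝓝 (h (w z))) := hpt _ hwz_r
    have key : ∀ n : ℕ, H n (w z) =
        deriv w 0 * H n z + (l ^ n)⁻¹ * (w (g^[n] z) - deriv w 0 * g^[n] z) := by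
      intro n
      simp only [hH]
      rw [← hitcomm n z hz1]
      ring
    have terr : Tendsto (fun n => (l ^ n)⁻¹ * (w (g^[n] z) - deriv w 0 * g^[n] z))
        atTop (𝓝 0) := by
      have hb : ∀ n : ℕ, ‖(l ^ n)⁻¹ * (w (g^[n] z) - deriv w 0 * g^[n] z)‖
          ≤ (3 * r^2) * (c^2/a)^n := by
        intro n
        have hwmem := hitmem n z hz
        have hw1 : g^[n] z ∈ ball (0:ℂ) 1 := hrball hwmem
        have hq := schwarz_quad hwd hwm hw0 hw1
        have hbn : ‖g^[n] z‖ ≤ c ^ n * r := by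
          calc ‖g^[n] z‖ ≤ c ^ n * ‖z‖ := hitbound n z hz
            _ ≤ c ^ n * r := mul_le_mul_of_nonneg_left hzr (pow_nonneg hc0.le n)
        have h2 : ‖w (g^[n] z) - deriv w 0 * g^[n] z‖ ≤ 3 * (c^n * r)^2 := by
          calc ‖w (g^[n] z) - deriv w 0 * g^[n] z‖ ≤ 3 * ‖g^[n] z‖^2 := hq
            _ ≤ 3 * (c^n * r)^2 := by nlinarith [norm_nonneg (g^[n] z)]
        rw [norm_mul, norm_inv, norm_pow, ← ha]
        calc (a ^ n)⁻¹ * ‖w (g^[n] z) - deriv w 0 * g^[n] z‖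
            ≤ (a ^ n)⁻¹ * (3 * (c^n * r)^2) := by
              exact mul_le_mul le_rfl h2 (norm_nonneg _) (by positivity)
          _ = (3 * r^2) * (c^2/a)^n := by
              rw [div_pow, ← pow_mul]
              rw [mul_pow, ← pow_mul, mul_comm n 2]
              field_simp
      have hgeo : Tendsto (fun n : ℕ => (3 * r^2) * (c^2/a)^n) atTop (𝓝 0) := by
        rw [show (0:ℝ) = (3*r^2) * 0 by ring]
        apply Tendsto.const_mul
        apply tendsto_pow_atTop_nhds_zero_of_lt_one (by positivity)
        rw [div_lt_one ha0]; exact hc2a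
      exact squeeze_zero_norm hb hgeo
    have t2 : Tendsto (fun n => H n (w z)) atTop (𝓝 (deriv w 0 * h z + 0)) := by
      have tA : Tendsto (fun n => deriv w 0 * H n z) atTop (𝓝 (deriv w 0 * h z)) :=
        (hpt z hz).const_mul _
      have := tA.add terr
      apply Tendsto.congr _ this
      intro n
      rw [key n]
    rw [add_zero] at t2
    exact tendsto_nhds_unique t1 t2
  -- h is locally injective at 0
  have hA : AnalyticAt ℂ h 0 := (hhd.analyticOnNhd isOpen_ball) 0 (mem_ball_self hr0)
  obtain ⟨p, hp⟩ := hA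
  have hstrict : HasStrictDerivAt h 1 0 := by
    have h1 := hp.hasStrictDerivAt
    have h2 := h1.hasDerivAt.deriv
    rw [← hderivh, h2]
    exact h1
  have hfd := hstrict.hasStrictFDerivAt_equiv one_ne_zero
  obtain ⟨li, hli⟩ : ∃ li : ℂ → ℂ, ∀ᶠ x in 𝓝 (0:ℂ), li (h x) = x :=
    ⟨_, hfd.eventually_left_inverse⟩
  have hueq := hfe u hud hum hu0 hcu
  have hveq := hfe v hvd hvm hv0 hcv
  have hucont : Tendsto u (𝓝 0) (𝓝 (0:ℂ)) := by
    have := (hud.differentiableAt (ball_mem_nhds (0:ℂ) one_pos)).continuousAt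
    rw [ContinuousAt, hu0] at this
    exact this
  have hvcont : Tendsto v (𝓝 0) (𝓝 (0:ℂ)) := by
    have := (hvd.differentiableAt (ball_mem_nhds (0:ℂ) one_pos)).continuousAt
    rw [ContinuousAt, hv0] at this
    exact this
  have hev1 : ∀ᶠ z in 𝓝 (0:ℂ), li (u z |> h) = u z := hucont.eventually hli
  have hev2 : ∀ᶠ z in 𝓝 (0:ℂ), li (v z |> h) = v z := hvcont.eventually hli
  have hevr : ∀ᶠ z in 𝓝 (0:ℂ), z ∈ closedBall (0:ℂ) r :=
    eventually_of_mem (Metric.closedBall_mem_nhds (0:ℂ) hr0) (fun x hx => hx)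
  have hev : ∀ᶠ z in 𝓝 (0:ℂ), u z = v z := by
    filter_upwards [hev1, hev2, hevr] with z h1 h2 hzr
    have e1 : h (u z) = h (v z) := by rw [hueq z hzr, hveq z hzr, hderiv]
    calc u z = li (h (u z)) := h1.symm
      _ = li (h (v z)) := by rw [e1]
      _ = v z := h2
  exact (hud.analyticOnNhd isOpen_ball).eqOn_of_preconnected_of_eventuallyEq
    (hvd.analyticOnNhd isOpen_ball) (convex_ball _ _).isPreconnected (mem_ball_self one_pos) hev
end

lemma auto_of_conj_rotation {τ C : ℂ} (hτ : τ ∈ unitDisk) (hC : ‖C‖ = 1)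
    {G1 : ℂ → ℂ} (hdiff : DifferentiableOn ℂ G1 unitDisk) (hmapsG : MapsTo G1 unitDisk unitDisk)
    (heq : ∀ w ∈ unitDisk, mobius τ (G1 (mobius τ w)) = C * w) : IsDiskAutomorphism G1 := by
  refine ⟨hdiff, ?_⟩
  have hC0 : C ≠ 0 := by
    intro h; rw [h] at hC; simp at hC
  have hCi : ‖C⁻¹‖ = 1 := by rw [norm_inv, hC]; norm_num
  have hrep : ∀ z ∈ unitDisk, G1 z = mobius τ (C * mobius τ z) := by
    intro z hz
    have h1 := heq (mobius τ z) (mobius_mem hτ hz)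
    rw [mobius_mobius hτ hz] at h1
    have h2 : mobius τ (mobius τ (G1 z)) = G1 z := mobius_mobius hτ (hmapsG hz)
    rw [← h2, h1]
  set f : ℂ → ℂ := fun z => mobius τ (C * mobius τ z) with hf
  set fi : ℂ → ℂ := fun z => mobius τ (C⁻¹ * mobius τ z) with hfi
  have hfmaps : MapsTo f unitDisk unitDisk := fun z hz =>
    mobius_mem hτ (mul_mem_unitDisk hC (mobius_mem hτ hz))
  have hfimaps : MapsTo fi unitDisk unitDisk := fun z hz =>
    mobius_mem hτ (mul_mem_unitDisk hCi (mobius_mem hτ hz))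
  have hinv1 : ∀ z ∈ unitDisk, fi (f z) = z := by
    intro z hz
    simp only [hf, hfi]
    rw [mobius_mobius hτ (mul_mem_unitDisk hC (mobius_mem hτ hz))]
    rw [← mul_assoc, inv_mul_cancel₀ hC0, one_mul, mobius_mobius hτ hz]
  have hinv2 : ∀ z ∈ unitDisk, f (fi z) = z := by
    intro z hz
    simp only [hf, hfi]
    rw [mobius_mobius hτ (mul_mem_unitDisk hCi (mobius_mem hτ hz))]
    rw [← mul_assoc, mul_inv_cancel₀ hC0, one_mul, mobius_mobius hτ hz]
  have hbij_f : BijOn f unitDisk unitDisk :=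
    Set.InvOn.bijOn ⟨fun z hz => hinv1 z hz, fun z hz => hinv2 z hz⟩ hfmaps hfimaps
  exact (Set.EqOn.bijOn_iff (fun z hz => hrep z hz)).mpr hbij_f

/-- Proposition 6: if `S₁` is a group of elliptic automorphisms and the elements of `S₂`
are not automorphisms, then commutativity of `F₁` and `G₁` implies that `F₁` commutes
with every `G_t`. -/
theorem elliptic_group_element_commutes_with_semigroup
    (τ : ℂ) (hτ : τ ∈ unitDisk) (φ : ℝ)
    (G : ℝ → ℂ → ℂ) (hSG : ContSemigroupOn G)
    (hGaut : ∀ t : ℝ, 0 < t → ¬ IsDiskAutomorphism (G t))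
    (hcomm : ∀ z ∈ unitDisk,
      mobius τ (Complex.exp (Complex.I * φ) * mobius τ (G 1 z))
        = G 1 (mobius τ (Complex.exp (Complex.I * φ) * mobius τ z))) :
    ∀ t : ℝ, 0 ≤ t → ∀ z ∈ unitDisk,
      mobius τ (Complex.exp (Complex.I * φ) * mobius τ (G t z))
        = G t (mobius τ (Complex.exp (Complex.I * φ) * mobius τ z)) := by
  have hD : unitDisk = Metric.ball (0:ℂ) 1 := unitDisk_eq
  have hball_iff : ∀ x : ℂ, x ∈ Metric.ball (0:ℂ) 1 ↔ x ∈ unitDisk := by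
    intro x; rw [hD]
  set e : ℂ := Complex.exp (Complex.I * φ) with he_def
  have habs_e : ‖e‖ = 1 := by
    rw [he_def, Complex.norm_exp]
    norm_num [Complex.mul_re]
  have he0 : e ≠ 0 := by intro h; rw [h] at habs_e; simp at habs_e
  have habs_ei : ‖e⁻¹‖ = 1 := by rw [norm_inv, habs_e]; norm_num
  intro t ht z hz
  by_cases he1 : e = 1
  · rw [he1, one_mul, one_mul, mobius_mobius hτ (hSG.maps t ht hz), mobius_mobius hτ hz]
  -- the conjugated semigroup
  set g : ℝ → ℂ → ℂ := fun s w => mobius τ (G s (mobius τ w)) with hgdef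
  have h0mem : (0:ℂ) ∈ unitDisk := by rw [mem_unitDisk]; simp
  have hgmaps : ∀ s : ℝ, 0 ≤ s → MapsTo (g s) unitDisk unitDisk := fun s hs w hw =>
    mobius_mem hτ (hSG.maps s hs (mobius_mem hτ hw))
  have hgdiff : ∀ s : ℝ, 0 ≤ s → DifferentiableOn ℂ (g s) unitDisk := by
    intro s hs
    exact (mobius_diffOn hτ).comp
      ((hSG.holo s hs).comp (mobius_diffOn hτ) (fun w hw => mobius_mem hτ hw))
      (fun w hw => hSG.maps s hs (mobius_mem hτ hw))
  have hgcomp : ∀ s : ℝ, 0 ≤ s → ∀ t' : ℝ, 0 ≤ t' → ∀ w ∈ unitDisk,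
      g (t' + s) w = g t' (g s w) := by
    intro s hs t' ht' w hw
    have h1 : mobius τ (mobius τ (G s (mobius τ w))) = G s (mobius τ w) :=
      mobius_mobius hτ (hSG.maps s hs (mobius_mem hτ hw))
    simp only [hgdef]
    rw [h1, hSG.comp s hs t' ht' (mobius τ w) (mobius_mem hτ hw)]
  -- transfer of the commutation hypothesis
  have hRcomm : ∀ w ∈ unitDisk, e * g 1 w = g 1 (e * w) := by
    intro w hw
    have hmw : mobius τ w ∈ unitDisk := mobius_mem hτ hw
    have h1 := hcomm (mobius τ w) hmw
    rw [mobius_mobius hτ hw] at h1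
    have hewmem : e * w ∈ unitDisk := mul_mem_unitDisk habs_e hw
    have hxmem : e * g 1 w ∈ unitDisk :=
      mul_mem_unitDisk habs_e (hgmaps 1 zero_le_one hw)
    have hymem : g 1 (e * w) ∈ unitDisk := hgmaps 1 zero_le_one hewmem
    have hmx : mobius τ (e * g 1 w) = mobius τ (g 1 (e * w)) := by
      simp only [hgdef]
      rw [mobius_mobius hτ (hSG.maps 1 zero_le_one (mobius_mem hτ hewmem))]
      exact h1
    calc e * g 1 w = mobius τ (mobius τ (e * g 1 w)) := (mobius_mobius hτ hxmem).symm
      _ = mobius τ (mobius τ (g 1 (e * w))) := by rw [hmx]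
      _ = g 1 (e * w) := mobius_mobius hτ hymem
  have hg10 : g 1 0 = 0 := by
    have h1 := hRcomm 0 h0mem
    rw [mul_zero] at h1
    have h2 : (e - 1) * g 1 0 = 0 := by linear_combination h1
    rcases mul_eq_zero.1 h2 with h | h
    · exact absurd (by linear_combination h) he1
    · exact h
  -- g 1 is not (conjugated to) a rotation
  have not_rot : ∀ C : ℂ, ‖C‖ = 1 →
      Set.EqOn (g 1) (fun w => C * w) unitDisk → False := by
    intro C hCabs hEq
    apply hGaut 1 one_pos
    apply auto_of_conj_rotation hτ hCabs (hSG.holo 1 zero_le_one) (hSG.maps 1 zero_le_one)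
    intro w hw
    exact hEq hw
  -- ball versions of the facts about g 1
  have hgd : DifferentiableOn ℂ (g 1) (Metric.ball 0 1) := hD ▸ hgdiff 1 zero_le_one
  have hgm : MapsTo (g 1) (Metric.ball 0 1) (Metric.ball 0 1) := hD ▸ hgmaps 1 zero_le_one
  -- every g s fixes 0
  have hfix : ∀ s : ℝ, 0 ≤ s → g s 0 = 0 := by
    intro s hs
    have hwmem : g s 0 ∈ unitDisk := hgmaps s hs h0mem
    have hfixw : g 1 (g s 0) = g s 0 := by
      rw [← hgcomp s hs 1 zero_le_one 0 h0mem, add_comm,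
        hgcomp 1 zero_le_one s hs 0 h0mem, hg10]
    by_contra hne
    have hdsl : dslope (g 1) 0 (g s 0) = 1 := by
      rw [dslope_of_ne _ hne, slope_def_field, hg10, hfixw, sub_zero,
        div_self hne]
    have heq := schwarz_rigid hgd hgm hg10 ((hball_iff _).2 hwmem) (by rw [hdsl]; simp)
    rw [hdsl] at heq
    apply not_rot 1 (by simp)
    intro x hx
    simpa using heq ((hball_iff _).2 hx)
  -- the multiplier
  set lam : ℂ := deriv (g 1) 0 with hlam
  have hlam_le : ‖lam‖ ≤ 1 := schwarz_deriv_le hgd hgm hg10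
  have hlam_lt : ‖lam‖ < 1 := by
    rcases lt_or_eq_of_le hlam_le with h | h
    · exact h
    · exfalso
      have hds0 : dslope (g 1) 0 0 = lam := dslope_same _ _
      have heq := schwarz_rigid hgd hgm hg10 (Metric.mem_ball_self one_pos)
        (by rw [hds0]; exact h)
      rw [hds0] at heq
      apply not_rot lam (by exact h)
      intro x hx
      exact heq ((hball_iff _).2 hx)
  -- multiplicativity of the derivative at 0
  have hdiffAt : ∀ s : ℝ, 0 ≤ s → DifferentiableAt ℂ (g s) 0 := fun s hs =>
    (hgdiff s hs).differentiableAt (isOpen_unitDisk.mem_nhds h0mem)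
  have hpow : ∀ s : ℝ, 0 ≤ s → ∀ j : ℕ,
      deriv (g (s * ((j:ℝ) + 1))) 0 = (deriv (g s) 0) ^ (j + 1) := by
    intro s hs j
    induction j with
    | zero => norm_num
    | succ j ih =>
      have hsj : (0:ℝ) ≤ s * ((j:ℝ) + 1) := by positivity
      have harith : s * ((((j+1):ℕ):ℝ) + 1) = s + s * ((j:ℝ) + 1) := by
        push_cast; ring
      rw [harith]
      have hEv : g (s + s * ((j:ℝ) + 1)) =ᶠ[𝓝 0] (g s) ∘ (g (s * ((j:ℝ) + 1))) := by
        apply eventually_of_mem (isOpen_unitDisk.mem_nhds h0mem)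
        intro w hw
        exact hgcomp (s * ((j:ℝ) + 1)) hsj s hs w hw
      rw [hEv.deriv_eq]
      have hd1 : DifferentiableAt ℂ (g s) ((g (s * ((j:ℝ) + 1))) 0) := by
        rw [hfix _ hsj]; exact hdiffAt s hs
      have hd2 : DifferentiableAt ℂ (g (s * ((j:ℝ) + 1))) 0 := hdiffAt _ hsj
      rw [deriv_comp 0 hd1 hd2, hfix _ hsj, ih, pow_succ]
      ring
  have hlam_ne : lam ≠ 0 := by
    intro h0
    have hzero : ∀ n : ℕ, deriv (g (1/((n:ℝ)+1))) 0 = 0 := by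
      intro n
      have hs : (0:ℝ) ≤ 1/((n:ℝ)+1) := by positivity
      have hp := hpow (1/((n:ℝ)+1)) hs n
      rw [show (1/((n:ℝ)+1)) * ((n:ℝ)+1) = 1 by field_simp] at hp
      have hzz : (deriv (g (1/((n:ℝ)+1))) 0) ^ (n + 1) = 0 := by
        rw [← hp, ← hlam, h0]
      exact pow_eq_zero_iff (Nat.succ_ne_zero n) |>.mp hzz
    set w0 : ℂ := ((1/12 : ℝ) : ℂ) with hw0def
    have hnw0 : ‖w0‖ = 1/12 := by
      rw [hw0def, Complex.norm_real]
      norm_num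
    have hw0b : w0 ∈ Metric.ball (0:ℂ) 1 := by
      rw [Metric.mem_ball, dist_zero_right, hnw0]; norm_num
    have hw0u : w0 ∈ unitDisk := (hball_iff _).1 hw0b
    have hb : ∀ n : ℕ, ‖g (1/((n:ℝ)+1)) w0‖ ≤ 3 * ‖w0‖^2 := by
      intro n
      have hs : (0:ℝ) ≤ 1/((n:ℝ)+1) := by positivity
      have hq := schwarz_quad (hD ▸ hgdiff _ hs) (hD ▸ hgmaps _ hs) (hfix _ hs) hw0b
      rwa [hzero n, zero_mul, sub_zero] at hq
    have hcw : Tendsto (fun s : ℝ => g s w0) (nhdsWithin 0 (Set.Ioi 0)) (𝓝 w0) := by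
      have h1 := hSG.cont (mobius τ w0) (mobius_mem hτ hw0u)
      have h2 : ContinuousAt (mobius τ) (mobius τ w0) :=
        ((mobius_diffOn hτ).differentiableAt
          (isOpen_unitDisk.mem_nhds (mobius_mem hτ hw0u))).continuousAt
      have h3 := h2.tendsto.comp h1
      rw [mobius_mobius hτ hw0u] at h3
      exact h3
    have hseq : Tendsto (fun n : ℕ => 1/((n:ℝ)+1)) atTop (nhdsWithin 0 (Set.Ioi 0)) := by
      rw [tendsto_nhdsWithin_iff]
      refine ⟨tendsto_one_div_add_atTop_nhds_zero_nat, ?_⟩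
      refine Eventually.of_forall (fun n => ?_)
      rw [Set.mem_Ioi]
      positivity
    have hlim : Tendsto (fun n : ℕ => g (1/((n:ℝ)+1)) w0) atTop (𝓝 w0) := hcw.comp hseq
    have hle : ‖w0‖ ≤ 3*‖w0‖^2 := le_of_tendsto hlim.norm (Eventually.of_forall hb)
    rw [hnw0] at hle
    norm_num at hle
  -- commutation of g t with g 1
  have hcm : ∀ w ∈ unitDisk, g t (g 1 w) = g 1 (g t w) := by
    intro w hw
    rw [← hgcomp 1 zero_le_one t ht w hw, add_comm, hgcomp t ht 1 zero_le_one w hw]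
  -- inverse rotation commutation
  have hRinv : ∀ x ∈ unitDisk, g 1 (e⁻¹ * x) = e⁻¹ * g 1 x := by
    intro x hx
    have hxmem : e⁻¹ * x ∈ unitDisk := mul_mem_unitDisk habs_ei hx
    have h1 := hRcomm (e⁻¹ * x) hxmem
    rw [← mul_assoc, mul_inv_cancel₀ he0, one_mul] at h1
    have h2 := congrArg (fun y => e⁻¹ * y) h1
    rw [← mul_assoc, inv_mul_cancel₀ he0, one_mul] at h2
    exact h2
  -- the two maps to compare
  set u : ℂ → ℂ := fun w => e⁻¹ * g t (e * w) with hu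
  have hud : DifferentiableOn ℂ u unitDisk := by
    have hlin : DifferentiableOn ℂ (fun w : ℂ => e * w) unitDisk :=
      (differentiableOn_const e).mul differentiableOn_id
    exact (differentiableOn_const e⁻¹).mul
      ((hgdiff t ht).comp hlin (fun w hw => mul_mem_unitDisk habs_e hw))
  have hum : MapsTo u unitDisk unitDisk := fun w hw =>
    mul_mem_unitDisk habs_ei (hgmaps t ht (mul_mem_unitDisk habs_e hw))
  have hu0 : u 0 = 0 := by
    simp only [hu]
    rw [mul_zero, hfix t ht, mul_zero]
  have hcu : ∀ w ∈ unitDisk, u (g 1 w) = g 1 (u w) := by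
    intro w hw
    have hewmem : e * w ∈ unitDisk := mul_mem_unitDisk habs_e hw
    simp only [hu]
    rw [hRcomm w hw, hcm (e*w) hewmem, hRinv (g t (e*w)) (hgmaps t ht hewmem)]
  have hderiv_uv : deriv u 0 = deriv (g t) 0 := by
    have h1 : HasDerivAt (fun w : ℂ => e * w) e 0 := by
      simpa using (hasDerivAt_id (0:ℂ)).const_mul e
    have h2 : HasDerivAt (g t) (deriv (g t) 0) ((fun w : ℂ => e * w) 0) := by
      simpa using (hdiffAt t ht).hasDerivAt
    have h3 := h2.comp 0 h1
    have h4 := h3.const_mul e⁻¹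
    have h5 : HasDerivAt u (e⁻¹ * (deriv (g t) 0 * e)) 0 := by
      simpa [hu, Function.comp] using h4
    rw [h5.deriv]
    field_simp
  -- apply the uniqueness theorem
  have hEqOn := koenigs_uniqueness hgd hgm hg10 hlam_ne hlam_lt
    (hD ▸ hud) (hD ▸ hum) hu0
    (hD ▸ hgdiff t ht) (hD ▸ hgmaps t ht) (hfix t ht)
    (fun w hw => hcu w ((hball_iff _).1 hw))
    (fun w hw => hcm w ((hball_iff _).1 hw))
    hderiv_uv
  -- conclude
  have hw : mobius τ z ∈ unitDisk := mobius_mem hτ hz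
  have hewm : e * mobius τ z ∈ unitDisk := mul_mem_unitDisk habs_e hw
  have hkey : e * g t (mobius τ z) = g t (e * mobius τ z) := by
    have h1 := hEqOn ((hball_iff _).2 hw)
    simp only [hu] at h1
    have h2 := congrArg (fun y => e * y) h1
    rw [← mul_assoc, mul_inv_cancel₀ he0, one_mul] at h2
    exact h2.symm
  have h2 : mobius τ (G t z) = g t (mobius τ z) := by
    simp only [hgdef]
    rw [mobius_mobius hτ hz]
  rw [h2, hkey]
  simp only [hgdef]
  exact mobius_mobius hτ (hSG.maps t ht (mobius_mem hτ hewm))
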